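/- Let Π be an even-near-critical centrally symmetric allowable sequence of 2n points in noncentral general position whose first move contains a crossing switch reversing the crossing substring s₁ of length 2d₁. Then for each 1 ≤ k ≤ d₁, the position of s₁(k) in permutation π_{n} (the permutation after n moves) equals 2n - k + 1; in particular the extreme point s₁(1) reaches position 2n, and its conjugate reaches position 1. -/

import Mathlib

/-- `σ` is obtained from `ρ` by reversing disjoint substrings of consecutive positions:
every position lies in an interval `[a,b]` of positions that gets reversed
(a trivial interval `a = b` accounts for untouched positions).
Permutations send points to positions (`0`-indexed). -/
def IsIntervalReversalStep (N : ℕ) (ρ σ : Fin N ≃ Fin N) : Prop :=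
  ∀ j : Fin N, ∃ a b : ℕ, a ≤ (j : ℕ) ∧ (j : ℕ) ≤ b ∧ b < N ∧
    ∀ p : Fin N, a ≤ ((ρ p : ℕ)) → ((ρ p : ℕ)) ≤ b → ((σ p : ℕ)) = a + b - ((ρ p : ℕ))

/-- An allowable sequence on `N` points: a doubly-infinite sequence of permutations
(point `p` occupies position `perm i p` in the `i`-th permutation), where
`perm (i + h)` is the reversal of `perm i`, consecutive permutations differ by
simultaneous reversals of disjoint consecutive substrings, and every pair of points
switches (i.e. reverses its relative order) exactly once per halfperiod. -/
structure AllowableSeq (N : ℕ) where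
  perm : ℤ → (Fin N ≃ Fin N)
  h : ℕ
  h_pos : 0 < h
  reversal : ∀ (i : ℤ) (p : Fin N), ((perm (i + h)) p : ℕ) = N - 1 - ((perm i) p : ℕ)
  step : ∀ i : ℤ, IsIntervalReversalStep N (perm (i - 1)) (perm i)
  flip_once : ∀ p q : Fin N, p ≠ q →
    ∃! i : ℤ, i ∈ Finset.Icc 1 (h : ℤ) ∧
      ¬ (((perm (i - 1)) p < (perm (i - 1)) q) ↔ ((perm i) p < (perm i) q))

/-- The pair of points `p, q` switches (participates in a common switch) in the
`i`-th move, i.e. their relative order is reversed from `perm (i-1)` to `perm i`. -/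
def Flips {N : ℕ} (A : AllowableSeq N) (i : ℤ) (p q : Fin N) : Prop :=
  ¬ (((A.perm (i - 1)) p < (A.perm (i - 1)) q) ↔ ((A.perm i) p < (A.perm i) q))

/-- `A` is centrally symmetric with conjugation `conj`: the positions of a point and
its conjugate always sum to `N - 1` (i.e. `2n + 1` with `1`-indexed positions). -/
def CentSym {N : ℕ} (A : AllowableSeq N) (conj : Fin N → Fin N) : Prop :=
  ∀ (i : ℤ) (p : Fin N), ((A.perm i) p : ℕ) + ((A.perm i) (conj p) : ℕ) = N - 1

/-- The `i`-th move of `A` (an allowable sequence on `2n` points) contains a crossing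
switch reversing a centered substring of `2d` points, occupying positions
`n - d, …, n + d - 1`; maximality of the reversed centered substring is required. -/
def CrossingAt (n : ℕ) (A : AllowableSeq (2 * n)) (i : ℤ) (d : ℕ) : Prop :=
  1 ≤ d ∧ d ≤ n ∧
  (∀ p : Fin (2 * n), n - d ≤ ((A.perm (i - 1)) p : ℕ) → ((A.perm (i - 1)) p : ℕ) < n + d →
      ((A.perm i) p : ℕ) = 2 * n - 1 - ((A.perm (i - 1)) p : ℕ)) ∧
  (d = n ∨ ∀ p : Fin (2 * n), ((A.perm (i - 1)) p : ℕ) = n - d - 1 →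
      ((A.perm i) p : ℕ) ≠ n + d)

/-- `A` has central signature `(d 0, …, d (t-1))`, witnessed by the strictly increasing
sequence `m 0 < ⋯ < m (t-1)` of moves of the halfperiod `1, …, 2n` containing the
crossing switches, the `i`-th reversing `2 * d i` points; no other move contains a
crossing switch. -/
def HasCentralSignature (n t : ℕ) (A : AllowableSeq (2 * n)) (d : Fin t → ℕ)
    (m : Fin t → ℤ) : Prop :=
  StrictMono m ∧ (∀ i, m i ∈ Finset.Icc (1 : ℤ) (2 * n)) ∧
  (∀ i, CrossingAt n A (m i) (d i)) ∧
  (∀ j : ℤ, j ∈ Finset.Icc (1 : ℤ) (2 * n) → (∀ i, j ≠ m i) → ∀ e, ¬ CrossingAt n A j e)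

/-- `A` is in noncentral general position: every switch other than a crossing switch is
a transposition, i.e. every point that moves in a move either moves by exactly one
position or takes part in the crossing switch of that move. -/
def NoncentralGenPos (n : ℕ) (A : AllowableSeq (2 * n)) : Prop :=
  ∀ (i : ℤ) (p : Fin (2 * n)), ((A.perm i) p : ℕ) ≠ ((A.perm (i - 1)) p : ℕ) →
    (((A.perm i) p : ℕ) + 1 = ((A.perm (i - 1)) p : ℕ) ∨
      ((A.perm (i - 1)) p : ℕ) + 1 = ((A.perm i) p : ℕ)) ∨
    ∃ e, CrossingAt n A i e ∧ n - e ≤ ((A.perm (i - 1)) p : ℕ) ∧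
      ((A.perm (i - 1)) p : ℕ) < n + e


namespace Stmt10Aux

open Finset

set_option maxHeartbeats 1000000

/-- Bundled context for the main theorem. -/
structure Ctx (n t : ℕ) where
  hn : 0 < n
  ht : 0 < t
  A : AllowableSeq (2 * n)
  conj : Fin (2 * n) → Fin (2 * n)
  hcs : CentSym A conj
  henc : A.h = 2 * n
  hgen : NoncentralGenPos n A
  d : Fin t → ℕ
  m : Fin t → ℤ
  hsig : HasCentralSignature n t A d m
  hfirst : m ⟨0, ht⟩ = 1

namespace Ctx

variable {n t : ℕ} (C : Ctx n t)

/-- position of point `u` at time `i` -/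
def pos (i : ℤ) (u : Fin (2 * n)) : ℕ := ((C.A.perm i) u : ℕ)

lemma pos_lt (i : ℤ) (u : Fin (2 * n)) : C.pos i u < 2 * n := (C.A.perm i u).isLt

lemma pos_inj {i : ℤ} {u v : Fin (2 * n)} (h : C.pos i u = C.pos i v) : u = v :=
  (C.A.perm i).injective (Fin.val_injective h)

lemma exists_pos (i : ℤ) {c : ℕ} (hc : c < 2 * n) : ∃ u, C.pos i u = c :=
  ⟨(C.A.perm i).symm ⟨c, hc⟩, by simp [pos]⟩

lemma conj_sum (i : ℤ) (u : Fin (2 * n)) :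
    C.pos i u + C.pos i (C.conj u) = 2 * n - 1 := C.hcs i u

lemma conj_ne (u : Fin (2 * n)) : C.conj u ≠ u := by
  intro h
  have h1 := C.conj_sum 0 u
  rw [h] at h1
  have h2 := C.pos_lt 0 u
  have := C.hn
  omega

lemma conj_conj (u : Fin (2 * n)) : C.conj (C.conj u) = u := by
  apply C.pos_inj (i := 0)
  have h1 := C.conj_sum 0 u
  have h2 := C.conj_sum 0 (C.conj u)
  have h3 := C.pos_lt 0 u
  have h4 := C.pos_lt 0 (C.conj u)
  have := C.hn
  omega

lemma crossingAt (j : Fin t) : CrossingAt n C.A (C.m j) (C.d j) := C.hsig.2.2.1 j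

lemma d_pos (j : Fin t) : 1 ≤ C.d j := (C.crossingAt j).1

lemma d_le (j : Fin t) : C.d j ≤ n := (C.crossingAt j).2.1

lemma m_mem (j : Fin t) : C.m j ∈ Finset.Icc (1 : ℤ) (2 * n) := C.hsig.2.1 j

lemma m_mono : StrictMono C.m := C.hsig.1

lemma m_one : C.m ⟨0, C.ht⟩ = 1 := C.hfirst

/-- the size of a crossing at a given move is unique -/
lemma crossing_unique {i : ℤ} {e e' : ℕ} (h : CrossingAt n C.A i e)
    (h' : CrossingAt n C.A i e') : e = e' := by
  have key : ∀ a b : ℕ, CrossingAt n C.A i a → CrossingAt n C.A i b → a < b → False := by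
    intro a b ha hb hab
    have ha1 := ha.1
    have hb2 := hb.2.1
    have hn := C.hn
    have hc : n - a - 1 < 2 * n := by omega
    obtain ⟨u, hu⟩ := C.exists_pos (i - 1) hc
    have hu' : ((C.A.perm (i - 1)) u : ℕ) = n - a - 1 := hu
    have h1 : ((C.A.perm i) u : ℕ) = 2 * n - 1 - ((C.A.perm (i - 1)) u : ℕ) :=
      hb.2.2.1 u (by omega) (by omega)
    have h2 : ((C.A.perm i) u : ℕ) = n + a := by omega
    rcases ha.2.2.2 with h3 | h3
    · omega
    · exact h3 u hu' h2
  rcases lt_trichotomy e e' with h1 | h1 | h1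
  · exact absurd (key e e' h h' h1) (by simp)
  · exact h1
  · exact absurd (key e' e h' h h1) (by simp)

/-- `u` makes a unit move (or stays) at move `i`. -/
def unitAt (i : ℤ) (u : Fin (2 * n)) : Prop :=
  C.pos i u ≤ C.pos (i - 1) u + 1 ∧ C.pos (i - 1) u ≤ C.pos i u + 1

lemma block_jump (j : Fin t) (u : Fin (2 * n))
    (h1 : n - C.d j ≤ C.pos (C.m j - 1) u) (h2 : C.pos (C.m j - 1) u < n + C.d j) :
    C.pos (C.m j) u = 2 * n - 1 - C.pos (C.m j - 1) u :=
  (C.crossingAt j).2.2.1 u h1 h2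

/-- basic structure of a single move inside the halfperiod -/
lemma move {i : ℤ} (hi1 : 1 ≤ i) (hi2 : i ≤ 2 * n) (u : Fin (2 * n)) :
    C.unitAt i u ∨
    ∃ j : Fin t, i = C.m j ∧ n - C.d j ≤ C.pos (i - 1) u ∧ C.pos (i - 1) u < n + C.d j ∧
      C.pos i u = 2 * n - 1 - C.pos (i - 1) u := by
  by_cases heq : C.pos i u = C.pos (i - 1) u
  · exact Or.inl ⟨by omega, by omega⟩
  · have heq' : ((C.A.perm i) u : ℕ) ≠ ((C.A.perm (i - 1)) u : ℕ) := heq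
    rcases C.hgen i u heq' with h | ⟨e, hce, hb1, hb2⟩
    · have h1 : ((C.A.perm i) u : ℕ) + 1 = ((C.A.perm (i - 1)) u : ℕ) ∨
        ((C.A.perm (i - 1)) u : ℕ) + 1 = ((C.A.perm i) u : ℕ) := h
      have e1 : C.pos i u = ((C.A.perm i) u : ℕ) := rfl
      have e2 : C.pos (i - 1) u = ((C.A.perm (i - 1)) u : ℕ) := rfl
      exact Or.inl ⟨by omega, by omega⟩
    · by_cases hj : ∃ j : Fin t, i = C.m j
      · obtain ⟨j, rfl⟩ := hj
        have he : e = C.d j := C.crossing_unique hce (C.crossingAt j)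
        subst he
        have hb1' : n - C.d j ≤ C.pos (C.m j - 1) u := hb1
        have hb2' : C.pos (C.m j - 1) u < n + C.d j := hb2
        exact Or.inr ⟨j, rfl, hb1', hb2', C.block_jump j u hb1' hb2'⟩
      · push_neg at hj
        exact absurd hce (C.hsig.2.2.2 i (by simp; omega) hj e)

lemma flips_iff (i : ℤ) (u v : Fin (2 * n)) :
    Flips C.A i u v ↔
      ¬ (C.pos (i - 1) u < C.pos (i - 1) v ↔ C.pos i u < C.pos i v) := by
  simp only [Flips, Fin.lt_def, pos]

lemma flips_symm {i : ℤ} {u v : Fin (2 * n)} (huv : u ≠ v) (h : Flips C.A i u v) :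
    Flips C.A i v u := by
  rw [flips_iff] at h ⊢
  have h1 : C.pos (i - 1) u ≠ C.pos (i - 1) v := fun hh => huv (C.pos_inj hh)
  have h2 : C.pos i u ≠ C.pos i v := fun hh => huv (C.pos_inj hh)
  omega

lemma swap_of_flip {i : ℤ} {u v : Fin (2 * n)} (hf : Flips C.A i u v)
    (hu : C.unitAt i u) (hv : C.unitAt i v)
    (hlt : C.pos (i - 1) u < C.pos (i - 1) v) :
    C.pos (i - 1) v = C.pos (i - 1) u + 1 ∧ C.pos i u = C.pos (i - 1) u + 1 ∧
      C.pos i v = C.pos (i - 1) u := by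
  rw [flips_iff] at hf
  have huv : u ≠ v := fun h => by subst h; exact lt_irrefl _ hlt
  have h2 : C.pos i u ≠ C.pos i v := fun hh => huv (C.pos_inj hh)
  obtain ⟨hu1, hu2⟩ := hu
  obtain ⟨hv1, hv2⟩ := hv
  omega

/-- order persistence when no flips occur in a window -/
lemma persist {u v : Fin (2 * n)} (a : ℤ) (len : ℕ)
    (hnf : ∀ c, a < c → c ≤ a + len → ¬ Flips C.A c u v) :
    (C.pos a u < C.pos a v ↔ C.pos (a + len) u < C.pos (a + len) v) := by
  induction len with
  | zero => simp
  | succ l ih =>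
      have h1 := ih (fun c hc1 hc2 => hnf c hc1 (by omega))
      have h2 : ¬ Flips C.A (a + l + 1) u v := hnf _ (by omega) (by push_cast; omega)
      rw [flips_iff, not_not] at h2
      have e1 : (a + l + 1 : ℤ) - 1 = a + l := by ring
      rw [e1] at h2
      have e2 : (a + (l + 1 : ℕ) : ℤ) = a + l + 1 := by push_cast; ring
      rw [e2]
      exact h1.trans h2

lemma persist' {u v : Fin (2 * n)} {a b : ℤ} (hab : a ≤ b)
    (hnf : ∀ c, a < c → c ≤ b → ¬ Flips C.A c u v) :
    (C.pos a u < C.pos a v ↔ C.pos b u < C.pos b v) := by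
  have hb : a + ((b - a).toNat : ℤ) = b := by omega
  have := C.persist (u := u) (v := v) a (b - a).toNat
    (fun c h1 h2 => hnf c h1 (by omega))
  rwa [hb] at this

lemma flip_exists {u v : Fin (2 * n)} {a b : ℤ} (hab : a ≤ b)
    (hchange : ¬ (C.pos a u < C.pos a v ↔ C.pos b u < C.pos b v)) :
    ∃ c, a < c ∧ c ≤ b ∧ Flips C.A c u v := by
  by_contra h
  push_neg at h
  exact hchange (C.persist' hab (fun c h1 h2 => h c h1 h2))

lemma flipOnce {u v : Fin (2 * n)} (huv : u ≠ v) :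
    ∃! i, i ∈ Finset.Icc (1 : ℤ) (2 * n) ∧ Flips C.A i u v := by
  have h := C.A.flip_once u v huv
  rw [C.henc] at h
  exact_mod_cast h

end Ctx

end Stmt10Aux

namespace Stmt10Aux
namespace Ctx

variable {n t : ℕ} (C : Ctx n t)

/-- if a point is in the block before a crossing, the conjugate pair flips there -/
lemma block_flips (j : Fin t) (u : Fin (2 * n))
    (h1 : n - C.d j ≤ C.pos (C.m j - 1) u) (h2 : C.pos (C.m j - 1) u < n + C.d j) :
    Flips C.A (C.m j) u (C.conj u) := by
  have hd1 := C.d_pos j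
  have hd2 := C.d_le j
  have hn := C.hn
  have hs := C.conj_sum (C.m j - 1) u
  have hlt1 := C.pos_lt (C.m j - 1) u
  have hlt2 := C.pos_lt (C.m j - 1) (C.conj u)
  have hc1 : n - C.d j ≤ C.pos (C.m j - 1) (C.conj u) := by omega
  have hc2 : C.pos (C.m j - 1) (C.conj u) < n + C.d j := by omega
  have e1 := C.block_jump j u h1 h2
  have e2 := C.block_jump j (C.conj u) hc1 hc2
  rw [flips_iff]
  have hne : C.pos (C.m j - 1) u ≠ C.pos (C.m j - 1) (C.conj u) := fun hh =>
    C.conj_ne u (C.pos_inj hh).symm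
  omega

/-- flips of a conjugate pair happen only at crossing moves, inside the block -/
lemma conj_flip_block {i : ℤ} {u : Fin (2 * n)} (hi1 : 1 ≤ i) (hi2 : i ≤ 2 * n)
    (hf : Flips C.A i u (C.conj u)) :
    ∃ j, i = C.m j ∧ n - C.d j ≤ C.pos (i - 1) u ∧ C.pos (i - 1) u < n + C.d j := by
  have hn := C.hn
  have hs := C.conj_sum (i - 1) u
  have hlt1 := C.pos_lt (i - 1) u
  have hlt2 := C.pos_lt (i - 1) (C.conj u)
  have hne : C.pos (i - 1) u ≠ C.pos (i - 1) (C.conj u) := fun hh =>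
    C.conj_ne u (C.pos_inj hh).symm
  -- first: both points make unit moves ⇒ contradiction with the signature,
  -- unless i is a crossing move and u is in the block
  by_cases hj : ∃ j : Fin t, i = C.m j
  · obtain ⟨j, rfl⟩ := hj
    refine ⟨j, rfl, ?_⟩
    by_contra hb
    have hcu : ¬ (n - C.d j ≤ C.pos (C.m j - 1) (C.conj u) ∧
        C.pos (C.m j - 1) (C.conj u) < n + C.d j) := by
      have hd2 := C.d_le j
      omega
    have hu : C.unitAt (C.m j) u := by
      rcases C.move hi1 hi2 u with h | ⟨j', hj', h1, h2, _⟩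
      · exact h
      · have : j' = j := C.m_mono.injective hj'.symm
        subst this
        exact absurd ⟨h1, h2⟩ hb
    have hv : C.unitAt (C.m j) (C.conj u) := by
      rcases C.move hi1 hi2 (C.conj u) with h | ⟨j', hj', h1, h2, _⟩
      · exact h
      · have : j' = j := C.m_mono.injective hj'.symm
        subst this
        exact absurd ⟨h1, h2⟩ hcu
    -- adjacent swap at center: positions n-1, n, both in the block: contradiction
    have hd1 := C.d_pos j
    rcases lt_or_gt_of_ne hne with hlt | hlt
    · obtain ⟨e1, e2, e3⟩ := C.swap_of_flip hf hu hv hlt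
      omega
    · obtain ⟨e1, e2, e3⟩ := C.swap_of_flip (C.flips_symm (C.conj_ne u).symm hf) hv hu hlt
      omega
  · -- non-crossing move: every point moves by ≤ 1
    push_neg at hj
    exfalso
    have hunit : ∀ w, C.unitAt i w := by
      intro w
      rcases C.move hi1 hi2 w with h | ⟨j', hj', _⟩
      · exact h
      · exact absurd hj' (hj j')
    -- get the adjacent swap, at positions n-1 and n
    have key : ∀ w₁ w₂ : Fin (2 * n), Flips C.A i w₁ w₂ → w₁ ≠ w₂ →
        C.pos (i - 1) w₁ < C.pos (i - 1) w₂ →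
        C.pos (i - 1) w₁ + C.pos (i - 1) w₂ = 2 * n - 1 →
        False := by
      intro w₁ w₂ hfw hnew hltw hsw
      obtain ⟨e1, e2, e3⟩ := C.swap_of_flip hfw (hunit w₁) (hunit w₂) hltw
      -- positions are n-1 and n
      have hp1 : C.pos (i - 1) w₁ = n - 1 := by
        have := C.pos_lt (i - 1) w₁
        omega
      have hp2 : C.pos (i - 1) w₂ = n := by omega
      -- construct a crossing of half-length 1 at move i
      have hcross : CrossingAt n C.A i 1 := by
        refine ⟨le_refl 1, hn, ?_, ?_⟩
        · intro w hw1 hw2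
          have hwlt := C.pos_lt (i - 1) w
          have : C.pos (i - 1) w = n - 1 ∨ C.pos (i - 1) w = n := by
            have h1' : n - 1 ≤ ((C.A.perm (i - 1)) w : ℕ) := hw1
            have h2' : ((C.A.perm (i - 1)) w : ℕ) < n + 1 := hw2
            have e0 : C.pos (i - 1) w = ((C.A.perm (i - 1)) w : ℕ) := rfl
            omega
          rcases this with h | h
          · have : w = w₁ := C.pos_inj (h.trans hp1.symm)
            subst this
            have e0 : ((C.A.perm i) w : ℕ) = C.pos i w := rfl
            have e0' : ((C.A.perm (i-1)) w : ℕ) = C.pos (i-1) w := rfl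
            omega
          · have : w = w₂ := C.pos_inj (h.trans hp2.symm)
            subst this
            have e0 : ((C.A.perm i) w : ℕ) = C.pos i w := rfl
            have e0' : ((C.A.perm (i-1)) w : ℕ) = C.pos (i-1) w := rfl
            omega
        · by_cases hn1 : (1 : ℕ) = n
          · exact Or.inl hn1
          · refine Or.inr (fun w hw1 hw2 => ?_)
            have hu := hunit w
            have e0 : ((C.A.perm i) w : ℕ) = C.pos i w := rfl
            have e0' : ((C.A.perm (i-1)) w : ℕ) = C.pos (i-1) w := rfl
            obtain ⟨hu1, hu2⟩ := hu
            omega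
      exact C.hsig.2.2.2 i (by simp; omega) hj 1 hcross
    rcases lt_or_gt_of_ne hne with hlt | hlt
    · exact key u (C.conj u) hf (fun hh => C.conj_ne u hh.symm) hlt hs
    · exact key (C.conj u) u (C.flips_symm (fun hh => C.conj_ne u hh.symm) hf)
        (C.conj_ne u) hlt (by omega)

/-- the unique flip move of the conjugate pair of `u` -/
noncomputable def fm (u : Fin (2 * n)) : ℤ :=
  (C.flipOnce (fun hh => C.conj_ne u hh.symm : u ≠ C.conj u)).exists.choose

lemma fm_spec (u : Fin (2 * n)) :
    C.fm u ∈ Finset.Icc (1 : ℤ) (2 * n) ∧ Flips C.A (C.fm u) u (C.conj u) :=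
  (C.flipOnce (fun hh => C.conj_ne u hh.symm : u ≠ C.conj u)).exists.choose_spec

lemma fm_unique {u : Fin (2 * n)} {i : ℤ} (hi : i ∈ Finset.Icc (1 : ℤ) (2 * n))
    (hf : Flips C.A i u (C.conj u)) : i = C.fm u := by
  obtain ⟨w, hw, huniq⟩ := C.flipOnce (fun hh => C.conj_ne u hh.symm : u ≠ C.conj u)
  have h1 := huniq i ⟨hi, hf⟩
  have h2 := huniq (C.fm u) ⟨(C.fm_spec u).1, (C.fm_spec u).2⟩
  rw [h1, h2]

/-- the index of the crossing where the conjugate pair of `u` flips -/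
noncomputable def bj (u : Fin (2 * n)) : Fin t :=
  (C.conj_flip_block (by exact_mod_cast (Finset.mem_Icc.mp (C.fm_spec u).1).1)
    (by exact_mod_cast (Finset.mem_Icc.mp (C.fm_spec u).1).2) (C.fm_spec u).2).choose

lemma bj_spec (u : Fin (2 * n)) :
    C.fm u = C.m (C.bj u) ∧ n - C.d (C.bj u) ≤ C.pos (C.fm u - 1) u ∧
      C.pos (C.fm u - 1) u < n + C.d (C.bj u) :=
  (C.conj_flip_block (by exact_mod_cast (Finset.mem_Icc.mp (C.fm_spec u).1).1)
    (by exact_mod_cast (Finset.mem_Icc.mp (C.fm_spec u).1).2) (C.fm_spec u).2).choose_spec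

/-- a point moves by at most one at any move other than its conjugate-flip move -/
lemma unit_off (u : Fin (2 * n)) {c : ℤ} (hc1 : 1 ≤ c) (hc2 : c ≤ 2 * n)
    (hne : c ≠ C.fm u) : C.unitAt c u := by
  rcases C.move hc1 hc2 u with h | ⟨j, rfl, h1, h2, _⟩
  · exact h
  · exact absurd (C.fm_unique (by simp; omega) (C.block_flips j u h1 h2)) hne

/-- a point in the block just before a crossing has its conjugate flip there -/
lemma fm_of_block (j : Fin t) (u : Fin (2 * n))
    (h1 : n - C.d j ≤ C.pos (C.m j - 1) u) (h2 : C.pos (C.m j - 1) u < n + C.d j) :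
    C.fm u = C.m j ∧ C.bj u = j := by
  have hm := Finset.mem_Icc.mp (C.m_mem j)
  have h := C.fm_unique (by simp; omega) (C.block_flips j u h1 h2)
  refine ⟨h.symm, ?_⟩
  have := (C.bj_spec u).1
  exact C.m_mono.injective (by rw [← this, ← h])

/-- trajectory bound: with only unit moves on a window, position changes by at most
the window length -/
lemma traj (u : Fin (2 * n)) (a : ℤ) (len : ℕ)
    (h : ∀ c, a < c → c ≤ a + len → C.unitAt c u) :
    (C.pos (a + len) u : ℤ) ≤ C.pos a u + len ∧
      (C.pos a u : ℤ) ≤ C.pos (a + len) u + len := by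
  induction len with
  | zero => simp
  | succ l ih =>
      obtain ⟨ih1, ih2⟩ := ih (fun c h1 h2 => h c h1 (by omega))
      have hl : C.unitAt (a + l + 1) u := h _ (by omega) (by push_cast; omega)
      obtain ⟨h1, h2⟩ := hl
      have e1 : (a + l + 1 : ℤ) - 1 = a + l := by ring
      rw [e1] at h1 h2
      have e2 : (a + (l + 1 : ℕ) : ℤ) = a + l + 1 := by push_cast; ring
      rw [e2]
      push_cast at *
      omega

lemma traj' (u : Fin (2 * n)) {a b : ℤ} (hab : a ≤ b)
    (h : ∀ c, a < c → c ≤ b → C.unitAt c u) :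
    (C.pos b u : ℤ) ≤ C.pos a u + (b - a) ∧
      (C.pos a u : ℤ) ≤ C.pos b u + (b - a) := by
  have hb : a + ((b - a).toNat : ℤ) = b := by omega
  have := C.traj u a (b - a).toNat (fun c h1 h2 => h c h1 (by omega))
  rw [hb] at this
  constructor <;> [skip; skip] <;> (obtain ⟨h1, h2⟩ := this; omega)

end Ctx
end Stmt10Aux

namespace Stmt10Aux
namespace Ctx

variable {n t : ℕ} (C : Ctx n t)

/-- The convoy lemma: if every point of `X` is strictly below every point of `Y` at
time `s` and strictly above at time `s'`, and all moves in between are unit moves,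
then the window must have length at least `|X| + |Y| - 1`. -/
lemma convoy (s s' : ℤ) (hss : s ≤ s')
    (hunit : ∀ c, s < c → c ≤ s' → ∀ u, C.unitAt c u)
    (X Y : Finset (Fin (2 * n)))
    (h0 : ∀ x ∈ X, ∀ y ∈ Y, C.pos s x < C.pos s y)
    (h1 : ∀ x ∈ X, ∀ y ∈ Y, C.pos s' y < C.pos s' x)
    (hX : X.Nonempty) (hY : Y.Nonempty) :
    (X.card : ℤ) + Y.card - 1 ≤ s' - s := by
  classical
  -- for each y, the set of moves where some x ∈ X flips with y
  set F : Fin (2 * n) → Finset ℤ :=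
    fun y => (Finset.Icc (s + 1) s').filter (fun c => ∃ x ∈ X, Flips C.A c x y) with hF
  have hflipAll : ∀ y ∈ Y, ∀ x ∈ X, ∃ c, s < c ∧ c ≤ s' ∧ Flips C.A c x y := by
    intro y hy x hx
    refine C.flip_exists hss ?_
    intro hiff
    have ha := h0 x hx y hy
    have hb := h1 x hx y hy
    omega
  -- each F y has at least |X| elements
  have hFcard : ∀ y ∈ Y, X.card ≤ (F y).card := by
    intro y hy
    set f : Fin (2 * n) → ℤ :=
      fun x => if hx : x ∈ X then (hflipAll y hy x hx).choose else 0 with hf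
    apply Finset.card_le_card_of_injOn f
    · intro x hx
      simp only [Finset.mem_coe] at hx ⊢
      have hc := (hflipAll y hy x hx).choose_spec
      rw [hf]
      simp only [dif_pos hx]
      rw [hF]
      simp only [Finset.mem_filter, Finset.mem_Icc]
      exact ⟨⟨by omega, hc.2.1⟩, x, hx, hc.2.2⟩
    · intro x hx x' hx' heq
      simp only [Finset.mem_coe] at hx hx'
      rw [hf] at heq
      simp only [dif_pos hx, dif_pos hx'] at heq
      have hc := (hflipAll y hy x hx).choose_spec
      have hc' := (hflipAll y hy x' hx').choose_spec
      set c := (hflipAll y hy x hx).choose with hcdef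
      have hfx : Flips C.A c x y := hc.2.2
      have hfx' : Flips C.A c x' y := by
        rw [heq]; exact hc'.2.2
      have hux := hunit c hc.1 hc.2.1 x
      have hux' := hunit c hc.1 hc.2.1 x'
      have huy := hunit c hc.1 hc.2.1 y
      -- each flip is an adjacent swap with y; y's swap partner is unique
      have hxy : x ≠ y := by rintro rfl; exact absurd (h0 x hx x hy) (lt_irrefl _)
      have hxy' : x' ≠ y := by rintro rfl; exact absurd (h0 x' hx' x' hy) (lt_irrefl _)
      have hne1 : C.pos (c - 1) x ≠ C.pos (c - 1) y := fun hh => hxy (C.pos_inj hh)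
      have hne1' : C.pos (c - 1) x' ≠ C.pos (c - 1) y := fun hh => hxy' (C.pos_inj hh)
      have key : ∀ w ∈ X, Flips C.A c w y → C.pos (c - 1) w ≠ C.pos (c - 1) y →
          (C.pos (c - 1) w + 1 = C.pos (c - 1) y ∧ C.pos c y = C.pos (c - 1) w) ∨
          (C.pos (c - 1) y + 1 = C.pos (c - 1) w ∧ C.pos c y = C.pos (c - 1) w) := by
        intro w hw hfw hnew
        rcases lt_or_gt_of_ne hnew with hlt | hlt
        · obtain ⟨e1, e2, e3⟩ := C.swap_of_flip hfw (hunit c hc.1 hc.2.1 w) huy hlt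
          exact Or.inl ⟨by omega, by omega⟩
        · have hwy : w ≠ y := fun hh => hnew (by rw [hh])
          obtain ⟨e1, e2, e3⟩ := C.swap_of_flip (C.flips_symm hwy hfw)
            huy (hunit c hc.1 hc.2.1 w) hlt
          exact Or.inr ⟨by omega, by omega⟩
      have k1 := key x hx hfx hne1
      have k2 := key x' hx' hfx' hne1'
      apply C.pos_inj (i := c - 1)
      omega
  -- the first flip-move of y
  have hFne : ∀ y ∈ Y, (F y).Nonempty := by
    intro y hy
    rw [← Finset.card_pos]
    have := hFcard y hy
    have := Finset.card_pos.mpr hX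
    omega
  set st : Fin (2 * n) → ℤ := fun y => if hy : y ∈ Y then (F y).min' (hFne y hy) else 0
    with hst
  have hstmem : ∀ y (hy : y ∈ Y), st y ∈ F y := by
    intro y hy; rw [hst]; simp only [dif_pos hy]; exact Finset.min'_mem _ _
  have hstrange : ∀ y ∈ Y, s + 1 ≤ st y ∧ st y ≤ s' := by
    intro y hy
    have := hstmem y hy
    rw [hF] at this
    simp only [Finset.mem_filter, Finset.mem_Icc] at this
    exact ⟨this.1.1, this.1.2⟩
  -- upper bound on st y from |F y| ≥ |X|
  have hstup : ∀ y ∈ Y, st y ≤ s' + 1 - X.card := by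
    intro y hy
    have hsub : F y ⊆ Finset.Icc (st y) s' := by
      intro c hcmem
      have hmin : st y ≤ c := by
        rw [hst]; simp only [dif_pos hy]; exact Finset.min'_le _ _ hcmem
      rw [hF] at hcmem
      simp only [Finset.mem_filter, Finset.mem_Icc] at hcmem
      exact Finset.mem_Icc.mpr ⟨hmin, hcmem.1.2⟩
    have hcc := (hFcard y hy).trans (Finset.card_le_card hsub)
    rw [Int.card_Icc] at hcc
    have hr := hstrange y hy
    have hX1 : 1 ≤ X.card := Finset.card_pos.mpr hX
    omega
  -- before st y, y is above all of X
  have habove : ∀ y ∈ Y, ∀ x ∈ X, C.pos (st y - 1) x < C.pos (st y - 1) y := by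
    intro y hy x hx
    have hr := hstrange y hy
    have hpers : (C.pos s x < C.pos s y ↔ C.pos (st y - 1) x < C.pos (st y - 1) y) := by
      refine C.persist' (by omega) ?_
      intro c hc1 hc2 hfl
      have : c ∈ F y := by
        rw [hF]; simp only [Finset.mem_filter, Finset.mem_Icc]
        exact ⟨⟨by omega, by omega⟩, x, hx, hfl⟩
      have : st y ≤ c := by
        rw [hst]; simp only [dif_pos hy]; exact Finset.min'_le _ _ this
      omega
    exact hpers.mp (h0 x hx y hy)
  -- distinct first flip-moves
  have hstinj : Set.InjOn st Y := by
    intro y hy y' hy' heq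
    simp only [Finset.mem_coe] at hy hy'
    by_contra hne
    have hyy' : C.pos (st y - 1) y ≠ C.pos (st y - 1) y' := fun hh => hne (C.pos_inj hh)
    obtain ⟨x, hx, hfx⟩ := by
      have := hstmem y hy
      rw [hF] at this
      simp only [Finset.mem_filter, Finset.mem_Icc] at this
      exact this.2
    obtain ⟨x', hx', hfx'⟩ := by
      have := hstmem y' hy'
      rw [hF] at this
      simp only [Finset.mem_filter, Finset.mem_Icc] at this
      exact this.2
    rw [← heq] at hfx'
    have hr := hstrange y hy
    set c := st y with hc
    have hu : ∀ w, C.unitAt c w := hunit c (by omega) (by omega)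
    have ha1 : C.pos (c - 1) x < C.pos (c - 1) y := habove y hy x hx
    have ha2 : C.pos (c - 1) x' < C.pos (c - 1) y := habove y hy x' hx'
    have ha1' : C.pos (c - 1) x < C.pos (c - 1) y' := by
      have := habove y' hy' x hx; rwa [← heq] at this
    have ha2' : C.pos (c - 1) x' < C.pos (c - 1) y' := by
      have := habove y' hy' x' hx'; rwa [← heq] at this
    obtain ⟨e1, e2, e3⟩ := C.swap_of_flip hfx (hu x) (hu y) ha1
    obtain ⟨e1', e2', e3'⟩ := C.swap_of_flip hfx' (hu x') (hu y') ha2'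
    omega
  -- conclude
  have hcard : Y.card ≤ (Finset.Icc (s + 1) (s' + 1 - X.card)).card := by
    apply Finset.card_le_card_of_injOn st
    · intro y hy
      exact Finset.mem_Icc.mpr ⟨(hstrange y hy).1, hstup y hy⟩
    · exact hstinj
  rw [Int.card_Icc] at hcard
  have hX1 : 1 ≤ X.card := Finset.card_pos.mpr hX
  have hY1 : 1 ≤ Y.card := Finset.card_pos.mpr hY
  omega

end Ctx
end Stmt10Aux

namespace Stmt10Aux
namespace Ctx

variable {n t : ℕ} (C : Ctx n t)

lemma upper_iff (i : ℤ) (u : Fin (2 * n)) :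
    n ≤ C.pos i u ↔ C.pos i (C.conj u) < C.pos i u := by
  have h1 := C.conj_sum i u
  have h2 := C.pos_lt i u
  have h3 := C.pos_lt i (C.conj u)
  have hn := C.hn
  have hne : C.pos i u ≠ C.pos i (C.conj u) := fun hh =>
    C.conj_ne u (C.pos_inj hh).symm
  omega

/-- upper/lower status of a conjugate pair is constant away from its flip move -/
lemma conj_persist (u : Fin (2 * n)) {a b : ℤ} (hab : a ≤ b) (h0 : 0 ≤ a)
    (hb : b ≤ 2 * n) (hfm : C.fm u ≤ a ∨ b < C.fm u) :
    (n ≤ C.pos a u ↔ n ≤ C.pos b u) := by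
  rw [C.upper_iff, C.upper_iff]
  refine C.persist' hab ?_
  intro c hc1 hc2 hf
  have hf' : Flips C.A c u (C.conj u) := C.flips_symm (C.conj_ne u) hf
  have := C.fm_unique (u := u) (by simp; omega) hf'
  omega

/-- number of points occupying a position interval -/
lemma card_pos_filter (i : ℤ) (lo hi : ℕ) (hhi : hi < 2 * n) :
    (Finset.univ.filter (fun u => lo ≤ C.pos i u ∧ C.pos i u ≤ hi)).card =
      hi + 1 - lo := by
  classical
  rw [← Nat.card_Icc lo hi]
  apply Finset.card_bij (fun u _ => C.pos i u)
  · intro u hu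
    simp only [Finset.mem_filter] at hu
    exact Finset.mem_Icc.mpr ⟨hu.2.1, hu.2.2⟩
  · intro u hu v hv heq
    exact C.pos_inj heq
  · intro c hc
    rw [Finset.mem_Icc] at hc
    obtain ⟨u, hu⟩ := C.exists_pos i (lt_of_le_of_lt hc.2 hhi)
    refine ⟨u, ?_, hu⟩
    simp only [Finset.mem_filter]
    exact ⟨Finset.mem_univ _, by omega, by omega⟩

/-- occupants of the upper half of the block right after a crossing came from the
mirrored position -/
lemma block_occ (j : Fin t) (u : Fin (2 * n)) (h1 : n - C.d j ≤ C.pos (C.m j) u)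
    (h2 : C.pos (C.m j) u < n + C.d j) :
    C.pos (C.m j - 1) u = 2 * n - 1 - C.pos (C.m j) u ∧
      n - C.d j ≤ C.pos (C.m j - 1) u ∧ C.pos (C.m j - 1) u < n + C.d j := by
  have hd2 := C.d_le j
  have hn := C.hn
  have hd1 := C.d_pos j
  have hul := C.pos_lt (C.m j) u
  have hc : 2 * n - 1 - C.pos (C.m j) u < 2 * n := by omega
  obtain ⟨v, hv⟩ := C.exists_pos (C.m j - 1) hc
  have hv1 : n - C.d j ≤ C.pos (C.m j - 1) v := by omega
  have hv2 : C.pos (C.m j - 1) v < n + C.d j := by omega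
  have hj := C.block_jump j v hv1 hv2
  have huv : v = u := C.pos_inj (i := C.m j) (by omega)
  subst huv
  exact ⟨by omega, hv1, hv2⟩

/-- points in the upper half of the block just after crossing `j` (they are the lower
members of the conjugate pairs crossing there) -/
noncomputable def Lset (j : Fin t) : Finset (Fin (2 * n)) :=
  Finset.univ.filter (fun u => n ≤ C.pos (C.m j) u ∧ C.pos (C.m j) u ≤ n + C.d j - 1)

/-- points in the upper half of the block just before crossing `j` (upper members of
the pairs crossing there) -/
noncomputable def Qset (j : Fin t) : Finset (Fin (2 * n)) :=
  Finset.univ.filter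
    (fun u => n ≤ C.pos (C.m j - 1) u ∧ C.pos (C.m j - 1) u ≤ n + C.d j - 1)

lemma Lset_card (j : Fin t) : (C.Lset j).card = C.d j := by
  have hd1 := C.d_pos j
  have hd2 := C.d_le j
  have hn := C.hn
  rw [Lset, C.card_pos_filter (C.m j) n (n + C.d j - 1) (by omega)]
  omega

lemma Qset_card (j : Fin t) : (C.Qset j).card = C.d j := by
  have hd1 := C.d_pos j
  have hd2 := C.d_le j
  have hn := C.hn
  rw [Qset, C.card_pos_filter (C.m j - 1) n (n + C.d j - 1) (by omega)]
  omega

lemma Lset_fm {j : Fin t} {u : Fin (2 * n)} (hu : u ∈ C.Lset j) :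
    C.fm u = C.m j ∧ C.bj u = j ∧
      C.pos (C.m j - 1) u = 2 * n - 1 - C.pos (C.m j) u := by
  rw [Lset, Finset.mem_filter] at hu
  have hd1 := C.d_pos j
  have hd2 := C.d_le j
  have hn := C.hn
  obtain ⟨ho, h1, h2⟩ := C.block_occ j u (by omega) (by omega)
  obtain ⟨hf, hb⟩ := C.fm_of_block j u h1 h2
  exact ⟨hf, hb, ho⟩

lemma Qset_fm {j : Fin t} {u : Fin (2 * n)} (hu : u ∈ C.Qset j) :
    C.fm u = C.m j ∧ C.bj u = j := by
  rw [Qset, Finset.mem_filter] at hu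
  have hd1 := C.d_pos j
  have hd2 := C.d_le j
  have hn := C.hn
  exact C.fm_of_block j u (by omega) (by omega)

/-- the half-lengths of the crossings sum to `n` -/
lemma sum_d : ∑ j, C.d j = n := by
  classical
  have hn := C.hn
  have hUcard : (Finset.univ.filter (fun u : Fin (2 * n) => n ≤ C.pos 0 u)).card = n := by
    have he : (Finset.univ.filter (fun u : Fin (2 * n) => n ≤ C.pos 0 u)) =
        (Finset.univ.filter
          (fun u : Fin (2 * n) => n ≤ C.pos 0 u ∧ C.pos 0 u ≤ 2 * n - 1)) := by
      apply Finset.filter_congr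
      intro u _
      have := C.pos_lt 0 u
      constructor
      · intro h; exact ⟨h, by omega⟩
      · intro h; exact h.1
    rw [he, C.card_pos_filter 0 n (2 * n - 1) (by omega)]
    omega
  have hfib := Finset.card_eq_sum_card_fiberwise
    (f := C.bj) (s := Finset.univ.filter (fun u : Fin (2 * n) => n ≤ C.pos 0 u))
    (t := Finset.univ) (fun u _ => Finset.mem_univ _)
  have hfibcard : ∀ j : Fin t,
      ((Finset.univ.filter (fun u : Fin (2 * n) => n ≤ C.pos 0 u)).filter
        (fun u => C.bj u = j)).card = C.d j := by
    intro j
    have hd1 := C.d_pos j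
    have hd2 := C.d_le j
    have hm := Finset.mem_Icc.mp (C.m_mem j)
    have hbij : ((Finset.univ.filter (fun u : Fin (2 * n) => n ≤ C.pos 0 u)).filter
        (fun u => C.bj u = j)).card = (Finset.Icc n (n + C.d j - 1)).card := by
      apply Finset.card_bij (fun u _ => C.pos (C.m j - 1) u)
      · intro u hu
        simp only [Finset.mem_filter] at hu
        obtain ⟨⟨-, hup⟩, hbj⟩ := hu
        have hfm : C.fm u = C.m j := by rw [(C.bj_spec u).1, hbj]
        have hpers := C.conj_persist u (a := 0) (b := C.m j - 1) (by omega) (by omega)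
          (by omega) (by omega)
        have hup' : n ≤ C.pos (C.m j - 1) u := hpers.mp hup
        have hb := (C.bj_spec u).2
        rw [hfm] at hb
        rw [hbj] at hb
        exact Finset.mem_Icc.mpr ⟨hup', by omega⟩
      · intro u hu v hv heq
        exact C.pos_inj heq
      · intro c hc
        rw [Finset.mem_Icc] at hc
        have hclt : c < 2 * n := by omega
        obtain ⟨v, hv⟩ := C.exists_pos (C.m j - 1) hclt
        obtain ⟨hfm, hbj⟩ := C.fm_of_block j v (by omega) (by omega)
        have hpers := C.conj_persist v (a := 0) (b := C.m j - 1) (by omega) (by omega)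
          (by omega) (by omega)
        refine ⟨v, ?_, hv⟩
        simp only [Finset.mem_filter]
        exact ⟨⟨Finset.mem_univ _, hpers.mpr (by omega)⟩, hbj⟩
    rw [hbij, Nat.card_Icc]
    omega
  rw [hUcard] at hfib
  have hsum : ∑ j : Fin t, C.d j =
      ∑ j : Fin t, ((Finset.univ.filter (fun u : Fin (2 * n) => n ≤ C.pos 0 u)).filter
        (fun u => C.bj u = j)).card :=
    Finset.sum_congr rfl (fun j _ => (hfibcard j).symm)
  exact hsum.trans hfib.symm

end Ctx
end Stmt10Aux

namespace Stmt10Aux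
namespace Ctx

variable {n t : ℕ} (C : Ctx n t)

/-- tail sums of the signature -/
noncomputable def S (a : ℕ) : ℕ :=
  ∑ i ∈ Finset.univ.filter (fun i : Fin t => a ≤ (i : ℕ)), C.d i

lemma S_zero : C.S 0 = n := by
  rw [S]
  rw [Finset.filter_true_of_mem (fun i _ => Nat.zero_le _)]
  exact C.sum_d

lemma S_succ (a : ℕ) (ha : a < t) : C.S a = C.d ⟨a, ha⟩ + C.S (a + 1) := by
  rw [S, S]
  have hsplit : Finset.univ.filter (fun i : Fin t => a ≤ (i : ℕ)) =
      insert (⟨a, ha⟩ : Fin t) (Finset.univ.filter (fun i : Fin t => a + 1 ≤ (i : ℕ))) := by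
    ext i
    simp only [Finset.mem_filter, Finset.mem_univ, true_and, Finset.mem_insert]
    constructor
    · intro h
      rcases Nat.eq_or_lt_of_le h with h1 | h1
      · exact Or.inl (Fin.ext h1.symm)
      · exact Or.inr h1
    · rintro (rfl | h)
      · exact le_refl _
      · omega
  rw [hsplit, Finset.sum_insert (by simp)]

lemma S_mono {a b : ℕ} (hab : a ≤ b) : C.S b ≤ C.S a := by
  apply Finset.sum_le_sum_of_subset
  intro i hi
  simp only [Finset.mem_filter, Finset.mem_univ, true_and] at hi ⊢
  omega

lemma S_ge (a : ℕ) (ha : a < t) : C.d ⟨a, ha⟩ ≤ C.S a := by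
  rw [C.S_succ a ha]; omega

lemma S_one : C.S 1 = n - C.d ⟨0, C.ht⟩ := by
  have h0 := C.S_zero
  have h1 : C.S 0 = C.d ⟨0, C.ht⟩ + C.S 1 := C.S_succ 0 C.ht
  omega

lemma S_top (a : ℕ) (ha : t ≤ a) : C.S a = 0 := by
  rw [S]
  have he : Finset.univ.filter (fun i : Fin t => a ≤ (i : ℕ)) = ∅ := by
    ext i
    simp only [Finset.mem_filter, Finset.mem_univ, true_and,
      Finset.notMem_empty, iff_false]
    have := i.isLt
    omega
  rw [he, Finset.sum_empty]

/-- consecutive crossings are separated by at least the sum of their half-lengths -/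
lemma gap (j j' : Fin t) (hjj : (j : ℕ) + 1 = (j' : ℕ)) :
    (C.d j : ℤ) + C.d j' ≤ C.m j' - C.m j := by
  have hlt : j < j' := by rw [Fin.lt_def]; omega
  have hmlt : C.m j < C.m j' := C.m_mono hlt
  have hm1 := Finset.mem_Icc.mp (C.m_mem j)
  have hm2 := Finset.mem_Icc.mp (C.m_mem j')
  have hd1 := C.d_pos j
  have hd1' := C.d_pos j'
  have hd2 := C.d_le j
  have hd2' := C.d_le j'
  have hconv := C.convoy (C.m j) (C.m j' - 1) (by omega) ?_ (C.Lset j) (C.Qset j')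
    ?_ ?_ ?_ ?_
  · rw [C.Lset_card, C.Qset_card] at hconv
    omega
  · -- all moves strictly between the two crossings are unit moves
    intro c hc1 hc2 u
    rcases C.move (i := c) (by omega) (by omega) u with h | ⟨j'', hj'', h1, h2, _⟩
    · exact h
    · exfalso
      rcases le_or_gt j'' j with hle | hlt2
      · have := C.m_mono.monotone hle
        omega
      · have hle : j' ≤ j'' := by rw [Fin.le_def]; rw [Fin.lt_def] at hlt2; omega
        have := C.m_mono.monotone hle
        omega
  · -- at time m j, Lset j is below Qset j'
    intro x hx y hy
    have hxm := hx
    rw [Lset, Finset.mem_filter] at hxm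
    have hyfm := C.Qset_fm hy
    have hym := hy
    rw [Qset, Finset.mem_filter] at hym
    -- y is above the center at m j
    have hyup : n ≤ C.pos (C.m j) y := by
      have hpers := C.conj_persist y (a := C.m j) (b := C.m j' - 1) (by omega)
        (by omega) (by omega) (by rw [hyfm.1]; omega)
      exact hpers.mpr hym.2.1
    -- y is not in Lset j
    by_contra hcon
    push_neg at hcon
    have hyL : y ∈ C.Lset j := by
      rw [Lset, Finset.mem_filter]
      exact ⟨Finset.mem_univ _, hyup, by omega⟩
    have := (C.Lset_fm hyL).1
    rw [hyfm.1] at this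
    omega
  · -- at time m j' - 1, Qset j' is below Lset j
    intro x hx y hy
    have hxfm := C.Lset_fm hx
    have hxm := hx
    rw [Lset, Finset.mem_filter] at hxm
    have hym := hy
    rw [Qset, Finset.mem_filter] at hym
    have hxup : n ≤ C.pos (C.m j' - 1) x := by
      have hpers := C.conj_persist x (a := C.m j) (b := C.m j' - 1) (by omega)
        (by omega) (by omega) (by rw [hxfm.1]; omega)
      exact hpers.mp hxm.2.1
    -- x is not in the block of crossing j'
    by_cases hxb : C.pos (C.m j' - 1) x < n + C.d j'
    · exfalso
      have := (C.fm_of_block j' x (by omega) hxb).1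
      rw [hxfm.1] at this
      omega
    · omega
  · rw [← Finset.card_pos, C.Lset_card]; omega
  · rw [← Finset.card_pos, C.Qset_card]; omega

lemma pos_rev (u : Fin (2 * n)) :
    C.pos (2 * (n : ℤ)) u = 2 * n - 1 - C.pos 0 u := by
  have h := C.A.reversal 0 u
  rw [C.henc] at h
  have he : ((0 : ℤ) + ((2 * n : ℕ) : ℤ)) = 2 * (n : ℤ) := by push_cast; ring
  rw [he] at h
  exact h

/-- the last crossing must leave room for the final convoy up to time 2n -/
lemma top (jt : Fin t) (hmax : ∀ j' : Fin t, (j' : ℕ) ≤ (jt : ℕ)) (hne0 : (jt : ℕ) ≠ 0) :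
    (C.d jt : ℤ) + C.d ⟨0, C.ht⟩ - 1 ≤ 2 * n - C.m jt := by
  set j0 : Fin t := ⟨0, C.ht⟩ with hj0
  have hlt : j0 < jt := by rw [Fin.lt_def]; simp [hj0]; omega
  have hmlt : C.m j0 < C.m jt := C.m_mono hlt
  have hm1 := Finset.mem_Icc.mp (C.m_mem j0)
  have hm2 := Finset.mem_Icc.mp (C.m_mem jt)
  have hd1 := C.d_pos jt
  have hd1' := C.d_pos j0
  have hd2 := C.d_le jt
  have hd2' := C.d_le j0
  have hone : C.m j0 = 1 := C.hfirst
  have hn := C.hn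
  have hconv := C.convoy (C.m jt) (2 * (n : ℤ)) (by omega) ?_ (C.Lset jt) (C.Lset j0)
    ?_ ?_ ?_ ?_
  · rw [C.Lset_card, C.Lset_card] at hconv
    omega
  · -- all moves after the last crossing are unit moves
    intro c hc1 hc2 u
    rcases C.move (i := c) (by omega) (by omega) u with h | ⟨j'', hj'', h1, h2, _⟩
    · exact h
    · exfalso
      have hle : j'' ≤ jt := by rw [Fin.le_def]; exact hmax j''
      have := C.m_mono.monotone hle
      omega
  · -- at time m jt, Lset jt is below Lset j0
    intro x hx y hy
    have hxm := hx
    rw [Lset, Finset.mem_filter] at hxm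
    have hyfm := C.Lset_fm hy
    have hym := hy
    rw [Lset, Finset.mem_filter] at hym
    have hyup : n ≤ C.pos (C.m jt) y := by
      have hpers := C.conj_persist y (a := C.m j0) (b := C.m jt) (by omega)
        (by omega) (by omega) (by rw [hyfm.1]; omega)
      exact hpers.mp hym.2.1
    by_contra hcon
    push_neg at hcon
    have hyL : y ∈ C.Lset jt := by
      rw [Lset, Finset.mem_filter]
      exact ⟨Finset.mem_univ _, hyup, by omega⟩
    have := (C.Lset_fm hyL).1
    rw [hyfm.1] at this
    omega
  · -- at time 2n, Lset j0 is below Lset jt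
    intro x hx y hy
    have hxfm := C.Lset_fm hx
    have hxm := hx
    rw [Lset, Finset.mem_filter] at hxm
    have hyfm := C.Lset_fm hy
    have hym := hy
    rw [Lset, Finset.mem_filter] at hym
    -- position of y at time 0 and 2n
    have hy0 : C.pos 0 y = 2 * n - 1 - C.pos (C.m j0) y := by
      have h := hyfm.2.2
      have e : C.m j0 - 1 = (0 : ℤ) := by rw [hone]; ring
      rw [e] at h
      exact h
    have hy2n := C.pos_rev y
    -- position of x at time 0: below the center and outside the first block
    have hxlow : ¬ n ≤ C.pos 0 x := by
      have hpers := C.conj_persist x (a := 0) (b := C.m jt - 1) (by omega)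
        (by omega) (by omega) (by rw [hxfm.1]; omega)
      intro hcon
      have hup := hpers.mp hcon
      have := hxfm.2.2
      have hl := C.pos_lt (C.m jt) x
      omega
    have hxnb : ¬ (n - C.d j0 ≤ C.pos 0 x ∧ C.pos 0 x < n + C.d j0) := by
      intro hcon
      have e : C.m j0 - 1 = (0 : ℤ) := by rw [hone]; ring
      have hb1 : n - C.d j0 ≤ C.pos (C.m j0 - 1) x := by rw [e]; exact hcon.1
      have hb2 : C.pos (C.m j0 - 1) x < n + C.d j0 := by rw [e]; exact hcon.2
      have := (C.fm_of_block j0 x hb1 hb2).1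
      rw [hxfm.1] at this
      omega
    have hx2n := C.pos_rev x
    have hyl := C.pos_lt (C.m j0) y
    omega
  · rw [← Finset.card_pos, C.Lset_card]; omega
  · rw [← Finset.card_pos, C.Lset_card]; omega

/-- lower bound on the crossing times -/
lemma mlow : ∀ a (ha : a < t),
    2 * (n : ℤ) + 1 - C.d ⟨0, C.ht⟩ + C.d ⟨a, ha⟩ - 2 * C.S a ≤ C.m ⟨a, ha⟩ := by
  intro a
  induction a with
  | zero =>
      intro ha
      have h1 : C.m ⟨0, ha⟩ = 1 := C.hfirst
      have h2 := C.S_zero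
      omega
  | succ a ih =>
      intro ha
      have ha' : a < t := by omega
      have h1 := ih ha'
      have h2 := C.gap ⟨a, ha'⟩ ⟨a + 1, ha⟩ rfl
      have h3 := C.S_succ a ha'
      omega

/-- upper bound on the crossing times -/
lemma mhigh_aux : ∀ b a (ha : a < t), t - 1 - a = b →
    C.m ⟨a, ha⟩ ≤ 2 * (n : ℤ) + 1 - C.d ⟨0, C.ht⟩ + C.d ⟨a, ha⟩ - 2 * C.S a := by
  intro b
  induction b with
  | zero =>
      intro a ha hab
      by_cases ht2 : 2 ≤ t
      · have hmax : ∀ j' : Fin t, (j' : ℕ) ≤ a := by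
          intro j'
          have := j'.isLt
          omega
        have hne0 : a ≠ 0 := by omega
        have htop := C.top ⟨a, ha⟩ hmax hne0
        have hS : C.S a = C.d ⟨a, ha⟩ + C.S (a + 1) := C.S_succ a ha
        have hSt : C.S (a + 1) = 0 := C.S_top (a + 1) (by omega)
        omega
      · have ht1 : t = 1 := by omega
        have ha0 : a = 0 := by omega
        subst ha0
        have h1 : C.m ⟨0, ha⟩ = 1 := C.hfirst
        have h2 := C.S_zero
        have h3 : C.S 0 = C.d ⟨0, ha⟩ + C.S 1 := C.S_succ 0 ha
        have h4 : C.S 1 = 0 := C.S_top 1 (by omega)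
        omega
  | succ b ih =>
      intro a ha hab
      have ha1 : a + 1 < t := by omega
      have h1 := ih (a + 1) ha1 (by omega)
      have h2 := C.gap ⟨a, ha⟩ ⟨a + 1, ha1⟩ rfl
      have h3 : C.S a = C.d ⟨a, ha⟩ + C.S (a + 1) := C.S_succ a ha
      omega

lemma mhigh (a : ℕ) (ha : a < t) :
    C.m ⟨a, ha⟩ ≤ 2 * (n : ℤ) + 1 - C.d ⟨0, C.ht⟩ + C.d ⟨a, ha⟩ - 2 * C.S a :=
  C.mhigh_aux (t - 1 - a) a ha rfl

end Ctx
end Stmt10Aux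

namespace Stmt10Aux
namespace Ctx

variable {n t : ℕ} (C : Ctx n t)

/-- every point outside the upper stack is below position `2n - d₁` at time `n` -/
lemma main_bound (u : Fin (2 * n))
    (hu : ¬ (n - C.d ⟨0, C.ht⟩ ≤ C.pos 0 u ∧ C.pos 0 u ≤ n - 1)) :
    C.pos (n : ℤ) u ≤ 2 * n - 1 - C.d ⟨0, C.ht⟩ := by
  have hn := C.hn
  set d0 := C.d ⟨0, C.ht⟩ with hd0
  have hd01 : 1 ≤ d0 := C.d_pos _
  have hd0n : d0 ≤ n := C.d_le _
  have hone : C.m ⟨0, C.ht⟩ = 1 := C.hfirst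
  have hu0 := C.pos_lt 0 u
  have e0 : C.m ⟨0, C.ht⟩ - 1 = (0 : ℤ) := by rw [hone]; ring
  by_cases hcase1 : n ≤ C.pos 0 u ∧ C.pos 0 u ≤ n + d0 - 1
  · -- stack lower point: flips at move 1, below the center afterwards
    have hb1 : n - d0 ≤ C.pos (C.m ⟨0, C.ht⟩ - 1) u := by rw [e0]; omega
    have hb2 : C.pos (C.m ⟨0, C.ht⟩ - 1) u < n + d0 := by rw [e0]; omega
    obtain ⟨hfm, -⟩ := C.fm_of_block ⟨0, C.ht⟩ u hb1 hb2
    have hj := C.block_jump ⟨0, C.ht⟩ u hb1 hb2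
    rw [e0] at hj
    rw [hone] at hj
    have hlow1 : ¬ n ≤ C.pos 1 u := by omega
    have hpers := C.conj_persist u (a := 1) (b := (n : ℤ)) (by omega) (by omega)
      (by omega) (Or.inl (by rw [hfm, hone]))
    have hlow : ¬ n ≤ C.pos (n : ℤ) u := fun hc => hlow1 (hpers.mpr hc)
    omega
  · obtain ⟨hfm, hb1, hb2⟩ := C.bj_spec u
    set j := C.bj u with hj
    rw [hfm] at hb1 hb2
    have hmj := Finset.mem_Icc.mp (C.m_mem j)
    have hdj1 := C.d_pos j
    have hdjn := C.d_le j
    have hprelt := C.pos_lt (C.m j - 1) u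
    have hjne : j ≠ ⟨0, C.ht⟩ := by
      intro hcon
      rw [hcon] at hb1 hb2 hfm
      rw [e0] at hb1 hb2
      rw [← hd0] at hb1 hb2
      by_cases hle : C.pos 0 u ≤ n - 1
      · exact hu ⟨hb1, hle⟩
      · exact hcase1 ⟨by omega, by omega⟩
    have hjval : 1 ≤ (j : ℕ) := by
      rcases Nat.eq_zero_or_pos (j : ℕ) with h | h
      · exact absurd (Fin.ext h : j = ⟨0, C.ht⟩) hjne
      · exact h
    have hmlow : 2 * (n : ℤ) + 1 - d0 + C.d j - 2 * C.S (j : ℕ) ≤ C.m j := by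
      have h := C.mlow (j : ℕ) j.isLt
      simpa using h
    have hmhigh : (C.m j : ℤ) ≤ 2 * (n : ℤ) + 1 - d0 + C.d j - 2 * C.S (j : ℕ) := by
      have h := C.mhigh (j : ℕ) j.isLt
      simpa using h
    have hSle : C.S (j : ℕ) ≤ n - d0 := by
      have h1 := C.S_mono hjval
      have h2 := C.S_one
      rw [← hd0] at h2
      omega
    have hSge : C.d j ≤ C.S (j : ℕ) := by
      have h := C.S_ge (j : ℕ) j.isLt
      simpa using h
    by_cases hupper : n ≤ C.pos 0 u
    · -- initially upper, outside the first block
      by_cases hmn : C.m j ≤ (n : ℤ)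
      · -- crossed by time n: below the center from then on
        have hup : n ≤ C.pos (C.m j - 1) u := by
          have hpers := C.conj_persist u (a := 0) (b := C.m j - 1) (by omega)
            (by omega) (by omega) (Or.inr (by omega))
          exact hpers.mp hupper
        have hjump := C.block_jump j u hb1 hb2
        have hlowm : ¬ n ≤ C.pos (C.m j) u := by omega
        have hpers := C.conj_persist u (a := C.m j) (b := (n : ℤ)) (by omega)
          (by omega) (by omega) (Or.inl (by omega))
        have hlow : ¬ n ≤ C.pos (n : ℤ) u := fun hc => hlowm (hpers.mpr hc)
        omega
      · -- crossing after time n: descending upper point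
        have hup : n ≤ C.pos (C.m j - 1) u := by
          have hpers := C.conj_persist u (a := 0) (b := C.m j - 1) (by omega)
            (by omega) (by omega) (Or.inr (by omega))
          exact hpers.mp hupper
        have htraj := (C.traj' u (a := (n : ℤ)) (b := C.m j - 1) (by omega) ?_).2
        · omega
        · intro c hc1 hc2
          exact C.unit_off u (by omega) (by omega) (by rw [hfm]; omega)
    · -- initially lower, outside the first block
      have hlow0 : C.pos 0 u < n - d0 := by omega
      by_cases hmn : C.m j ≤ (n : ℤ)
      · -- crossed by time n: jumps up at m j, then unit moves up to n
        have hlowm : ¬ n ≤ C.pos (C.m j - 1) u := by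
          have hpers := C.conj_persist u (a := 0) (b := C.m j - 1) (by omega)
            (by omega) (by omega) (Or.inr (by omega))
          intro hc
          exact (by omega : ¬ n ≤ C.pos 0 u) (hpers.mpr hc)
        have hjump := C.block_jump j u hb1 hb2
        have htraj := (C.traj' u (a := C.m j) (b := (n : ℤ)) (by omega) ?_).1
        · omega
        · intro c hc1 hc2
          exact C.unit_off u (by omega) (by omega) (by rw [hfm]; omega)
      · -- not crossed by time n: still below the center
        have hpers := C.conj_persist u (a := 0) (b := (n : ℤ)) (by omega)
          (by omega) (by omega) (Or.inr (by omega))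
        have hlow : ¬ n ≤ C.pos (n : ℤ) u := fun hc =>
          (by omega : ¬ n ≤ C.pos 0 u) (hpers.mpr hc)
        omega

/-- the main result: the point starting at position `n - d₁ + (k-1)` is at position
`2n - k` at time `n` -/
lemma final (k : ℕ) (hk1 : 1 ≤ k) (hk2 : k ≤ C.d ⟨0, C.ht⟩) (p : Fin (2 * n))
    (hp : C.pos 0 p = n - C.d ⟨0, C.ht⟩ + (k - 1)) :
    C.pos (n : ℤ) p = 2 * n - k := by
  classical
  have hn := C.hn
  set d0 := C.d ⟨0, C.ht⟩ with hd0
  have hd01 : 1 ≤ d0 := C.d_pos _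
  have hd0n : d0 ≤ n := C.d_le _
  set SU := Finset.univ.filter
    (fun u : Fin (2 * n) => n - d0 ≤ C.pos 0 u ∧ C.pos 0 u ≤ n - 1) with hSU
  have hSUcard : SU.card = d0 := by
    rw [hSU, C.card_pos_filter 0 (n - d0) (n - 1) (by omega)]
    omega
  set Occ := Finset.univ.filter
    (fun u : Fin (2 * n) => 2 * n - d0 ≤ C.pos (n : ℤ) u ∧ C.pos (n : ℤ) u ≤ 2 * n - 1)
    with hOcc
  have hOcccard : Occ.card = d0 := by
    rw [hOcc, C.card_pos_filter (n : ℤ) (2 * n - d0) (2 * n - 1) (by omega)]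
    omega
  have hOS : Occ ⊆ SU := by
    intro u hu
    rw [hOcc, Finset.mem_filter] at hu
    rw [hSU, Finset.mem_filter]
    refine ⟨Finset.mem_univ _, ?_⟩
    by_contra hcon
    have := C.main_bound u hcon
    omega
  have hSO : SU = Occ := (Finset.eq_of_subset_of_card_le hOS (by omega)).symm
  have hpSU : p ∈ SU := by
    rw [hSU, Finset.mem_filter]
    exact ⟨Finset.mem_univ _, by omega, by omega⟩
  have hppos : 2 * n - d0 ≤ C.pos (n : ℤ) p ∧ C.pos (n : ℤ) p ≤ 2 * n - 1 := by
    have hm : p ∈ Occ := hSO ▸ hpSU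
    rw [hOcc, Finset.mem_filter] at hm
    exact hm.2
  -- the relative order inside the stack is reversed between times 0 and n
  have horder : ∀ u ∈ SU, ∀ v ∈ SU, u ≠ v →
      (C.pos (n : ℤ) u < C.pos (n : ℤ) v ↔ C.pos 0 v < C.pos 0 u) := by
    intro u hu v hv huv
    rw [hSU, Finset.mem_filter] at hu hv
    have e0 : C.m ⟨0, C.ht⟩ - 1 = (0 : ℤ) := by rw [C.hfirst]; ring
    have hju : C.pos (C.m ⟨0, C.ht⟩) u = 2 * n - 1 - C.pos (C.m ⟨0, C.ht⟩ - 1) u :=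
      C.block_jump _ u (by rw [e0]; omega) (by rw [e0]; omega)
    have hjv : C.pos (C.m ⟨0, C.ht⟩) v = 2 * n - 1 - C.pos (C.m ⟨0, C.ht⟩ - 1) v :=
      C.block_jump _ v (by rw [e0]; omega) (by rw [e0]; omega)
    rw [e0, C.hfirst] at hju hjv
    have hne0 : C.pos 0 u ≠ C.pos 0 v := fun hh => huv (C.pos_inj hh)
    have hlt0u := C.pos_lt 0 u
    have hlt0v := C.pos_lt 0 v
    have hflip : Flips C.A 1 u v := by
      rw [C.flips_iff]
      have e1 : (1 : ℤ) - 1 = 0 := by ring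
      rw [e1]
      omega
    obtain ⟨w, hw, huniq⟩ := C.flipOnce huv
    have hpers := C.persist' (u := u) (v := v) (a := 1) (b := (n : ℤ)) (by omega) ?_
    · rw [← hpers]
      omega
    · intro c hc1 hc2 hf
      have h1 := huniq 1 ⟨by simp; omega, hflip⟩
      have h2 := huniq c ⟨by simp; omega, hf⟩
      omega
  set Ab := Finset.univ.filter
    (fun u : Fin (2 * n) => C.pos (n : ℤ) p + 1 ≤ C.pos (n : ℤ) u ∧
      C.pos (n : ℤ) u ≤ 2 * n - 1) with hAb
  have hAbcard : Ab.card = 2 * n - 1 - C.pos (n : ℤ) p := by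
    rw [hAb, C.card_pos_filter (n : ℤ) (C.pos (n : ℤ) p + 1) (2 * n - 1) (by omega)]
    omega
  have hAbeq : Ab = SU.filter (fun u => C.pos 0 u + 1 ≤ C.pos 0 p) := by
    ext u
    rw [hAb, Finset.mem_filter, Finset.mem_filter]
    constructor
    · rintro ⟨-, h1, h2⟩
      have huOcc : u ∈ Occ := by
        rw [hOcc, Finset.mem_filter]
        exact ⟨Finset.mem_univ _, by omega, h2⟩
      have huSU : u ∈ SU := hOS huOcc
      have hup : u ≠ p := fun hh => by rw [hh] at h1; omega
      have := (horder p hpSU u huSU (Ne.symm hup)).mp (by omega)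
      exact ⟨huSU, by omega⟩
    · rintro ⟨huSU, hlt⟩
      have hup : u ≠ p := fun hh => by rw [hh] at hlt; omega
      have := (horder p hpSU u huSU (Ne.symm hup)).mpr (by omega)
      refine ⟨Finset.mem_univ _, by omega, by have := C.pos_lt (n : ℤ) u; omega⟩
  have hAbcard2 : Ab.card = k - 1 := by
    rw [hAbeq]
    rcases Nat.lt_or_ge k 2 with hk | hk
    · have hk1' : k = 1 := by omega
      have hemp : SU.filter (fun u => C.pos 0 u + 1 ≤ C.pos 0 p) = ∅ := by
        ext u
        simp only [Finset.mem_filter, Finset.notMem_empty, iff_false, not_and]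
        intro huSU
        rw [hSU, Finset.mem_filter] at huSU
        omega
      rw [hemp]
      simp
      omega
    · have he : SU.filter (fun u => C.pos 0 u + 1 ≤ C.pos 0 p) =
          Finset.univ.filter (fun u : Fin (2 * n) =>
            n - d0 ≤ C.pos 0 u ∧ C.pos 0 u ≤ n - d0 + (k - 2)) := by
        ext u
        rw [Finset.mem_filter, hSU, Finset.mem_filter, Finset.mem_filter]
        constructor
        · rintro ⟨⟨-, h1, h2⟩, h3⟩
          exact ⟨Finset.mem_univ _, by omega, by omega⟩
        · rintro ⟨-, h1, h2⟩
          exact ⟨⟨Finset.mem_univ _, by omega, by omega⟩, by omega⟩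
      rw [he, C.card_pos_filter 0 (n - d0) (n - d0 + (k - 2)) (by omega)]
      omega
  omega

end Ctx
end Stmt10Aux

/-- In an even-near-critical centrally symmetric allowable sequence of `2n` points in
noncentral general position whose first move contains a crossing switch of half-length
`d₁`, the point `s₁(k)` occupies position `2n - k + 1` (1-indexed; `2n - k` 0-indexed)
in the permutation `π_n`; in particular `s₁(1)` reaches the last position and its
conjugate the first position. -/
theorem stmt_10 (n t : ℕ) (hn : 0 < n) (ht : 0 < t) (A : AllowableSeq (2 * n))
    (conj : Fin (2 * n) → Fin (2 * n)) (hcs : CentSym A conj)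
    (henc : A.h = 2 * n) (hgen : NoncentralGenPos n A)
    (d : Fin t → ℕ) (m : Fin t → ℤ) (hsig : HasCentralSignature n t A d m)
    (hfirst : m ⟨0, ht⟩ = 1)
    (k : ℕ) (hk1 : 1 ≤ k) (hk2 : k ≤ d ⟨0, ht⟩)
    (p : Fin (2 * n)) (hp : ((A.perm 0) p : ℕ) = n - d ⟨0, ht⟩ + (k - 1)) :
    ((A.perm (n : ℤ)) p : ℕ) = 2 * n - k ∧
    (k = 1 → ((A.perm (n : ℤ)) p : ℕ) = 2 * n - 1 ∧ ((A.perm (n : ℤ)) (conj p) : ℕ) = 0) := by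
  let C : Stmt10Aux.Ctx n t :=
    ⟨hn, ht, A, conj, hcs, henc, hgen, d, m, hsig, hfirst⟩
  have hmain : C.pos (n : ℤ) p = 2 * n - k := C.final k hk1 hk2 p hp
  have h1 : ((A.perm (n : ℤ)) p : ℕ) = 2 * n - k := hmain
  refine ⟨h1, fun hk => ?_⟩
  have hsum := C.conj_sum (n : ℤ) p
  have h2 : C.pos (n : ℤ) p + C.pos (n : ℤ) (C.conj p) = 2 * n - 1 := hsum
  constructor
  · rw [h1, hk]
  · have h3 : C.pos (n : ℤ) (C.conj p) = 0 := by
      have hlt := C.pos_lt (n : ℤ) p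
      omega
    exact h3
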